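/- Let A be a complex n×n matrix and M = AA*. Then for every vector c ∈ ℂⁿ, (1/n)|∑_j c_j M_{j,j}|² ≤ ∑_{j,k} conj(c_j) c_k |M_{j,k}|². -/

import Mathlib

/-- Quadratic-form formulation of the Schur product theorem variant:
for `M = A Aᴴ` and any `c ∈ ℂⁿ`,
`(1/n)|∑ⱼ cⱼ M j j|² ≤ ∑ⱼₖ conj(cⱼ) cₖ |M j k|²`. -/
theorem schur_quadratic_form (n : ℕ) (A : Matrix (Fin n) (Fin n) ℂ) (c : Fin n → ℂ) :
    (1 / (n : ℝ)) * ‖∑ j, c j * (A * A.conjTranspose) j j‖ ^ 2 ≤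
      (∑ j, ∑ k, (starRingEnd ℂ) (c j) * c k *
        (‖(A * A.conjTranspose) j k‖ ^ 2 : ℂ)).re := by
  set M := A * A.conjTranspose with hM
  set B : Fin n → Fin n → ℂ :=
    fun u v => ∑ j, (starRingEnd ℂ) (c j) * A j u * (starRingEnd ℂ) (A j v) with hB
  have hMapply : ∀ j k, M j k = ∑ u, A j u * (starRingEnd ℂ) (A k u) := by
    intro j k; simp [hM, Matrix.mul_apply, Matrix.conjTranspose_apply, mul_comm]
  have swap : ∀ f : Fin n → Fin n → Fin n → Fin n → ℂ,
      ∑ j, ∑ k, ∑ u, ∑ v, f j k u v = ∑ u, ∑ v, ∑ j, ∑ k, f j k u v := by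
    intro f
    calc ∑ j, ∑ k, ∑ u, ∑ v, f j k u v
        = ∑ j, ∑ u, ∑ k, ∑ v, f j k u v :=
          Finset.sum_congr rfl fun j _ => Finset.sum_comm
      _ = ∑ u, ∑ j, ∑ k, ∑ v, f j k u v := Finset.sum_comm
      _ = ∑ u, ∑ j, ∑ v, ∑ k, f j k u v :=
          Finset.sum_congr rfl fun u _ => Finset.sum_congr rfl fun j _ => Finset.sum_comm
      _ = ∑ u, ∑ v, ∑ j, ∑ k, f j k u v :=
          Finset.sum_congr rfl fun u _ => Finset.sum_comm
  have key : (∑ j, ∑ k, (starRingEnd ℂ) (c j) * c k * ((‖M j k‖) ^ 2 : ℂ))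
      = ∑ u, ∑ v, ((Complex.normSq (B u v) : ℝ) : ℂ) := by
    have step1 : (∑ j, ∑ k, (starRingEnd ℂ) (c j) * c k * ((‖M j k‖) ^ 2 : ℂ))
        = ∑ j, ∑ k, ∑ u, ∑ v,
            ((starRingEnd ℂ) (c j) * A j u * (starRingEnd ℂ) (A j v)) *
            (c k * (starRingEnd ℂ) (A k u) * A k v) := by
      refine Finset.sum_congr rfl fun j _ => Finset.sum_congr rfl fun k _ => ?_
      have h1 : (((‖M j k‖) : ℂ)) ^ 2 = M j k * (starRingEnd ℂ) (M j k) := by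
        rw [Complex.mul_conj]
        norm_cast
        exact Complex.sq_norm _
      rw [h1, hMapply j k, map_sum]
      simp only [Finset.mul_sum, Finset.sum_mul, map_mul, Complex.conj_conj]
      rw [Finset.sum_comm]
      refine Finset.sum_congr rfl fun u _ => Finset.sum_congr rfl fun v _ => ?_
      ring
    rw [step1, swap]
    refine Finset.sum_congr rfl fun u _ => Finset.sum_congr rfl fun v _ => ?_
    rw [← Finset.sum_mul_sum, ← Complex.mul_conj]
    congr 1
    rw [hB, map_sum]
    refine Finset.sum_congr rfl fun k _ => ?_
    simp only [map_mul, Complex.conj_conj]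
  rw [key]
  have hre : (∑ u, ∑ v, ((Complex.normSq (B u v) : ℝ) : ℂ)).re
      = ∑ u, ∑ v, Complex.normSq (B u v) := by
    rw [Complex.re_sum]
    exact Finset.sum_congr rfl fun u _ => by rw [Complex.re_sum]; simp
  rw [hre]
  -- diagonal sum identity
  have hdiag : ∑ j, c j * M j j = (starRingEnd ℂ) (∑ u, B u u) := by
    rw [map_sum]
    have : ∀ u, (starRingEnd ℂ) (B u u) = ∑ j, c j * ((starRingEnd ℂ) (A j u) * A j u) := by
      intro u
      rw [hB, map_sum]
      refine Finset.sum_congr rfl fun j _ => ?_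
      simp only [map_mul, Complex.conj_conj]
      ring
    simp_rw [this]
    rw [Finset.sum_comm]
    refine Finset.sum_congr rfl fun j _ => ?_
    rw [hMapply]
    simp only [Finset.mul_sum]
    exact Finset.sum_congr rfl fun u _ => by ring
  have habs : ‖∑ j, c j * M j j‖ = ‖∑ u, B u u‖ := by
    rw [hdiag, Complex.norm_conj]
  rw [habs]
  have hCS : (‖∑ u, B u u‖) ^ 2 ≤ (n : ℝ) * ∑ u, Complex.normSq (B u u) := by
    calc (‖∑ u, B u u‖) ^ 2 ≤ (∑ u, ‖B u u‖) ^ 2 := by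
          have h := norm_sum_le Finset.univ (fun u => B u u)
          exact pow_le_pow_left₀ (norm_nonneg _) h 2
      _ ≤ (Finset.univ.card : ℝ) * ∑ u, (‖B u u‖) ^ 2 :=
          sq_sum_le_card_mul_sum_sq
      _ = (n : ℝ) * ∑ u, Complex.normSq (B u u) := by
          simp [Complex.sq_norm]
  have hmono : ∑ u, Complex.normSq (B u u) ≤ ∑ u, ∑ v, Complex.normSq (B u v) := by
    refine Finset.sum_le_sum fun u _ => ?_
    exact Finset.single_le_sum (fun v _ => Complex.normSq_nonneg _) (Finset.mem_univ u)
  rcases Nat.eq_zero_or_pos n with h0 | hn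
  · subst h0; simp
  · have hn' : (0:ℝ) < n := by exact_mod_cast hn
    rw [div_mul_eq_mul_div, one_mul, div_le_iff₀ hn']
    calc (‖∑ u, B u u‖) ^ 2 ≤ (n:ℝ) * ∑ u, Complex.normSq (B u u) := hCS
      _ ≤ (∑ u, ∑ v, Complex.normSq (B u v)) * n := by
          rw [mul_comm]
          exact mul_le_mul_of_nonneg_right hmono (le_of_lt hn')
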